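/- Let ρ₁, ρ₂ be finite positive Borel measures on the circle Λ with ρ₁(Λ) ≤ ρ₂(Λ), and let v ∈ 𝒥. (a) If l ∈ 𝒥 is such that the closed arc [l,v] is contained in 𝒥 and for every ε > 0 the arc [l−ε, l) contains a point not belonging to 𝒥, then J(v) = E(l,v). (b) If l ∉ 𝒥 and the half-open arc (l,v] is contained in 𝒥, then J(v) = ρ₁((l,v]) − ρ₂((l,v]). -/

import Mathlib

open MeasureTheory Set Filter Topology

noncomputable section

instance fact01 : Fact ((0:ℝ) < 1) := ⟨zero_lt_one⟩

/-- The circle `ℝ/ℤ`. -/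
abbrev Circle' : Type := AddCircle (1:ℝ)

/-- The angular position of `w` in the arc starting at `u`, measured positively;
a real number in `[0,1)`. -/
noncomputable def theta (u w : Circle') : ℝ := ((AddCircle.equivIco 1 0) (w - u) : ℝ)

/-- The closed arc `[u,v]` from `u` to `v` in the positive direction. -/
def arcCC (u v : Circle') : Set Circle' := {w | theta u w ≤ theta u v}

/-- The half-open arc `(u,v]`. -/
def arcOC (u v : Circle') : Set Circle' := {w | 0 < theta u w ∧ theta u w ≤ theta u v}

/-- The half-open arc `[u,v)`. -/
def arcCO (u v : Circle') : Set Circle' := {w | theta u w < theta u v}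

/-- The open arc `(u,v)`. -/
def arcOO (u v : Circle') : Set Circle' := {w | 0 < theta u w ∧ theta u w < theta u v}

/-- The excess `E(u,v) = ρ₁([u,v]) - ρ₂([u,v])`. -/
noncomputable def excess (ρ₁ ρ₂ : Measure Circle') (u v : Circle') : ℝ :=
  (ρ₁ (arcCC u v)).toReal - (ρ₂ (arcCC u v)).toReal

/-- The flux `J(v) = sup_u max (E(u,v)) 0`. -/
noncomputable def flux (ρ₁ ρ₂ : Measure Circle') (v : Circle') : ℝ :=
  ⨆ u : Circle', max (excess ρ₁ ρ₂ u v) 0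

/-- The set `𝒥 = {v | ∃ u, E(u,v) > 0}`. -/
def Jset (ρ₁ ρ₂ : Measure Circle') : Set Circle' := {v | ∃ u : Circle', 0 < excess ρ₁ ρ₂ u v}

lemma equivIco_coe (x : ℝ) : ((AddCircle.equivIco 1 0) (x : Circle') : ℝ) = Int.fract x := by
  have := AddCircle.coe_equivIco_mk_apply (p := (1:ℝ)) x
  simpa using this

lemma theta_mem_Ico (a w : Circle') : theta a w ∈ Ico (0:ℝ) 1 := by
  have h := ((AddCircle.equivIco 1 0) (w - a)).2
  simpa [theta] using h

lemma theta_nonneg (a w : Circle') : 0 ≤ theta a w := (theta_mem_Ico a w).1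
lemma theta_lt_one (a w : Circle') : theta a w < 1 := (theta_mem_Ico a w).2

lemma coe_theta (a w : Circle') : ((theta a w : ℝ) : Circle') = w - a := by
  have h := (AddCircle.equivIco 1 0).symm_apply_apply (w - a)
  have h2 : (AddCircle.equivIco 1 0).symm ((AddCircle.equivIco 1 0) (w - a))
      = ((((AddCircle.equivIco 1 0) (w - a)) : ℝ) : Circle') := rfl
  rw [h2] at h
  exact h

lemma theta_add_coe (a : Circle') (r : ℝ) : theta a (a + (r : Circle')) = Int.fract r := by
  have : a + (r : Circle') - a = (r : Circle') := by abel
  rw [theta, this, equivIco_coe]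

lemma theta_self (a : Circle') : theta a a = 0 := by
  have : a - a = ((0:ℝ) : Circle') := by simp
  rw [theta, this, equivIco_coe]; simp

lemma theta_eq_fract (a b w : Circle') : theta b w = Int.fract (theta a w - theta a b) := by
  have h : w - b = ((theta a w - theta a b : ℝ) : Circle') := by
    rw [AddCircle.coe_sub, coe_theta, coe_theta]; abel
  rw [theta, h, equivIco_coe]

lemma theta_eq_zero_iff {a b : Circle'} : theta a b = 0 ↔ b = a := by
  constructor
  · intro h
    have := coe_theta a b
    rw [h] at this
    simp at this
    have : b - a = 0 := this.symm
    have := sub_eq_zero.mp this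
    exact this
  · rintro rfl; exact theta_self _

-- master arc lemmas, to be appended
section Master
variable {a b v : Circle'}

lemma theta_base (a b w : Circle') :
    theta b w = if theta a b ≤ theta a w then theta a w - theta a b
      else theta a w - theta a b + 1 := by
  rw [theta_eq_fract a b w]
  rcases le_or_gt (theta a b) (theta a w) with h | h
  · rw [if_pos h]
    exact Int.fract_eq_self.2 ⟨by linarith,
      by linarith [theta_lt_one a w, theta_nonneg a b]⟩
  · rw [if_neg (not_le.2 h)]
    rw [(Int.fract_add_one (theta a w - theta a b)).symm]
    exact Int.fract_eq_self.2 ⟨by linarith [theta_nonneg a w, theta_lt_one a b], by linarith⟩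

lemma theta_base_le (h : theta a b ≤ theta a v) :
    theta b v = theta a v - theta a b := by rw [theta_base a b v, if_pos h]

lemma arcCC_base (h : theta a b ≤ theta a v) :
    arcCC b v = {w | theta a b ≤ theta a w ∧ theta a w ≤ theta a v} := by
  ext w
  simp only [arcCC, mem_setOf_eq, theta_base_le h, theta_base a b w]
  split_ifs with hw
  · constructor
    · intro h'; exact ⟨hw, by linarith⟩
    · intro h'; linarith [h'.2]
  · constructor
    · intro h'; exfalso; linarith [theta_lt_one a v, theta_nonneg a w]
    · intro h'; exact absurd h'.1 hw

lemma arcOC_base (h : theta a b ≤ theta a v) :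
    arcOC b v = {w | theta a b < theta a w ∧ theta a w ≤ theta a v} := by
  ext w
  simp only [arcOC, mem_setOf_eq, theta_base_le h, theta_base a b w]
  split_ifs with hw
  · constructor
    · intro h'; exact ⟨by linarith [h'.1], by linarith [h'.2]⟩
    · intro h'; exact ⟨by linarith [h'.1], by linarith [h'.2]⟩
  · constructor
    · intro h'; exfalso; linarith [theta_lt_one a v, theta_nonneg a w, h'.2]
    · intro h'; exfalso; exact hw (le_of_lt h'.1)

lemma arcOO_base (h : theta a b ≤ theta a v) :
    arcOO b v = {w | theta a b < theta a w ∧ theta a w < theta a v} := by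
  ext w
  simp only [arcOO, mem_setOf_eq, theta_base_le h, theta_base a b w]
  split_ifs with hw
  · constructor
    · intro h'; exact ⟨by linarith [h'.1], by linarith [h'.2]⟩
    · intro h'; exact ⟨by linarith [h'.1], by linarith [h'.2]⟩
  · constructor
    · intro h'; exfalso; linarith [theta_lt_one a v, theta_nonneg a w, h'.2]
    · intro h'; exfalso; exact hw (le_of_lt h'.1)

lemma theta_trichotomy (l u v : Circle') (hL : 0 ≤ theta l v) :
    theta u l ≤ theta u v ∨ (0 < theta l u ∧ theta l u ≤ theta l v) := by
  by_cases h : 0 < theta l u ∧ theta l u ≤ theta l v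
  · exact Or.inr h
  · left
    push_neg at h
    rcases le_or_gt (theta l u) 0 with h0 | h0
    · have : theta l u = 0 := le_antisymm h0 (theta_nonneg l u)
      have hu : u = l := theta_eq_zero_iff.1 this
      subst hu
      rw [theta_self]
      exact theta_nonneg u v
    · have hLt : theta l v < theta l u := h h0
      rw [theta_base l u l, theta_base l u v, theta_self]
      rw [if_neg (by linarith), if_neg (by linarith)]
      linarith

lemma measurable_theta (a : Circle') : Measurable (theta a) := by
  have h1 : Measurable fun w : Circle' => w - a := measurable_sub_const a
  have h2 := (AddCircle.measurableEquivIco (T := (1:ℝ)) 0).measurable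
  exact (measurable_subtype_coe.comp h2).comp h1

lemma measurableSet_arcCC (u v : Circle') : MeasurableSet (arcCC u v) :=
  measurable_theta u measurableSet_Iic

lemma measurableSet_arcOC (u v : Circle') : MeasurableSet (arcOC u v) :=
  measurable_theta u measurableSet_Ioc

lemma measurableSet_arcCO (u v : Circle') : MeasurableSet (arcCO u v) :=
  measurable_theta u measurableSet_Iio

lemma measurableSet_arcOO (u v : Circle') : MeasurableSet (arcOO u v) :=
  measurable_theta u measurableSet_Ioo

end Master

section RealSide

variable {α : Type*} [MeasurableSpace α]

lemma toReal_tendsto_zero (μ : Measure α) [IsFiniteMeasure μ] {S : ℕ → Set α}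
    (hm : ∀ n, MeasurableSet (S n)) (hmono : Antitone S) (hempty : (⋂ n, S n) = ∅) :
    Tendsto (fun n => (μ (S n)).toReal) atTop (𝓝 0) := by
  have h := MeasureTheory.tendsto_measure_iInter_atTop (μ := μ)
    (fun n => (hm n).nullMeasurableSet) hmono ⟨0, measure_ne_top μ _⟩
  rw [hempty, measure_empty] at h
  exact (ENNReal.tendsto_toReal (by simp)).comp h

lemma toReal_tendsto_iUnion (μ : Measure α) [IsFiniteMeasure μ] {S : ℕ → Set α}
    (hmono : Monotone S) :
    Tendsto (fun n => (μ (S n)).toReal) atTop (𝓝 ((μ (⋃ n, S n)).toReal)) := by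
  have h := MeasureTheory.tendsto_measure_iUnion_atTop (μ := μ) hmono
  exact (ENNReal.tendsto_toReal (measure_ne_top μ _)).comp h

lemma leftlim (μ₁ μ₂ : Measure ℝ) [IsFiniteMeasure μ₁] [IsFiniteMeasure μ₂]
    (κ c a : ℝ) (ha : 0 < a)
    (h : κ + (μ₁ (Ioo 0 a)).toReal - (μ₂ (Ioo 0 a)).toReal < c) :
    ∃ θ, 0 < θ ∧ θ < a ∧ κ + (μ₁ (Ioc 0 θ)).toReal - (μ₂ (Ioc 0 θ)).toReal < c := by
  set S : ℕ → Set ℝ := fun n => Ioc 0 (a - a / (n + 2)) with hS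
  have hsn : ∀ n : ℕ, (0:ℝ) < a / (n+2) := by
    intro n; positivity
  have hsn2 : ∀ m n : ℕ, m ≤ n → a / (n+2) ≤ a / (m+2) := by
    intro m n hmn
    have hm : (0:ℝ) < (m:ℝ)+2 := by positivity
    have hn : (0:ℝ) < (n:ℝ)+2 := by positivity
    rw [div_le_div_iff₀ hn hm]
    have : (m:ℝ) ≤ n := by exact_mod_cast hmn
    nlinarith
  have hmono : Monotone S := by
    intro m n hmn
    exact Ioc_subset_Ioc le_rfl (by linarith [hsn2 m n hmn])
  have hUnion : (⋃ n, S n) = Ioo 0 a := by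
    ext x
    simp only [hS, mem_iUnion, mem_Ioc, mem_Ioo]
    constructor
    · rintro ⟨n, hx1, hx2⟩
      exact ⟨hx1, lt_of_le_of_lt hx2 (by linarith [hsn n])⟩
    · rintro ⟨hx1, hx2⟩
      obtain ⟨n, hn⟩ := exists_nat_ge (a / (a - x))
      refine ⟨n, hx1, ?_⟩
      have hd : (0:ℝ) < a - x := by linarith
      have h1 : a ≤ (a - x) * (n + 2) := by
        rw [div_le_iff₀ hd] at hn
        nlinarith [hd]
      have h2 : a / (n+2) ≤ a - x := by
        rw [div_le_iff₀ (by positivity : (0:ℝ) < (n:ℝ)+2)]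
        linarith [h1]
      linarith
  have h1 := toReal_tendsto_iUnion μ₁ hmono
  have h2 := toReal_tendsto_iUnion μ₂ hmono
  rw [hUnion] at h1 h2
  have h3 : Tendsto (fun n => κ + (μ₁ (S n)).toReal - (μ₂ (S n)).toReal) atTop
      (𝓝 (κ + (μ₁ (Ioo 0 a)).toReal - (μ₂ (Ioo 0 a)).toReal)) :=
    (tendsto_const_nhds.add h1).sub h2
  have h4 := h3.eventually_lt_const h
  obtain ⟨n, hn⟩ := h4.exists
  have hlt : a / ((n:ℝ)+2) < a := by
    have h0n : (0:ℝ) ≤ (n:ℝ) := Nat.cast_nonneg n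
    rw [div_lt_iff₀ (by positivity : (0:ℝ) < (n:ℝ)+2)]
    nlinarith
  exact ⟨a - a / (n+2), by linarith, by linarith [hsn n], hn⟩

lemma core (μ₁ μ₂ : Measure ℝ) [IsFiniteMeasure μ₁] [IsFiniteMeasure μ₂] (κ L : ℝ)
    (H : ℝ → ℝ) (hH : ∀ s, H s = κ + (μ₁ (Ioc 0 s)).toReal - (μ₂ (Ioc 0 s)).toReal)
    (hstar : ∀ s, 0 < s → s ≤ L → H s ≤ 0 → ∃ θ, 0 ≤ θ ∧ θ < s ∧ H θ < H s) :
    ∀ s, 0 ≤ s → s ≤ L → min (H 0) 0 ≤ H s := by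
  by_contra hcon
  push_neg at hcon
  obtain ⟨s₀, hs₀0, hs₀L, hs₀⟩ := hcon
  set c := H s₀ with hc
  set B := {s : ℝ | 0 ≤ s ∧ s ≤ L ∧ H s ≤ c} with hBdef
  have hB : s₀ ∈ B := ⟨hs₀0, hs₀L, le_rfl⟩
  have hBne : B.Nonempty := ⟨s₀, hB⟩
  have hbdd : BddBelow B := ⟨0, fun x hx => hx.1⟩
  set r := sInf B with hrdef
  have hr0 : 0 ≤ r := le_csInf hBne fun x hx => hx.1
  have hrL : r ≤ L := le_trans (csInf_le hbdd hB) hs₀L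
  have key : H r ≤ c := by
    have h1 : ∀ n : ℕ, H r ≤ c + (μ₂ (Ioc r (r + 1/(n+1)))).toReal := by
      intro n
      have hpos : (0:ℝ) < 1/((n:ℝ)+1) := by positivity
      have hlt : r < r + 1/(n+1) := by linarith
      obtain ⟨sn, hsnB, hsn⟩ := exists_lt_of_csInf_lt hBne hlt
      have hrsn : r ≤ sn := csInf_le hbdd hsnB
      have hsplit : ∀ μ : Measure ℝ, μ (Ioc 0 sn) = μ (Ioc 0 r) + μ (Ioc r sn) := by
        intro μ
        rw [← Set.Ioc_union_Ioc_eq_Ioc hr0 hrsn,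
          measure_union (Set.Ioc_disjoint_Ioc_of_le le_rfl) measurableSet_Ioc]
      have e1 : (μ₁ (Ioc 0 sn)).toReal = (μ₁ (Ioc 0 r)).toReal + (μ₁ (Ioc r sn)).toReal := by
        rw [hsplit μ₁, ENNReal.toReal_add (measure_ne_top _ _) (measure_ne_top _ _)]
      have e2 : (μ₂ (Ioc 0 sn)).toReal = (μ₂ (Ioc 0 r)).toReal + (μ₂ (Ioc r sn)).toReal := by
        rw [hsplit μ₂, ENNReal.toReal_add (measure_ne_top _ _) (measure_ne_top _ _)]
      have hmono2 : (μ₂ (Ioc r sn)).toReal ≤ (μ₂ (Ioc r (r + 1/(n+1)))).toReal :=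
        ENNReal.toReal_mono (measure_ne_top _ _) (measure_mono (Ioc_subset_Ioc le_rfl hsn.le))
      have hHsn : H sn ≤ c := hsnB.2.2
      rw [hH r]
      rw [hH sn] at hHsn
      nlinarith [ENNReal.toReal_nonneg (a := μ₁ (Ioc r sn))]
    have h2 : Tendsto (fun n : ℕ => c + (μ₂ (Ioc r (r + 1/(n+1)))).toReal) atTop (𝓝 (c + 0)) := by
      refine tendsto_const_nhds.add (toReal_tendsto_zero μ₂ (fun n => measurableSet_Ioc) ?_ ?_)
      · intro m n hmn
        refine Ioc_subset_Ioc le_rfl ?_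
        have hm : (0:ℝ) < (m:ℝ)+1 := by positivity
        have hn : (0:ℝ) < (n:ℝ)+1 := by positivity
        have hcast : (m:ℝ) ≤ n := by exact_mod_cast hmn
        have : 1/((n:ℝ)+1) ≤ 1/((m:ℝ)+1) := by
          rw [div_le_div_iff₀ hn hm]
          nlinarith
        linarith
      · ext x
        simp only [mem_iInter, mem_Ioc, mem_empty_iff_false, iff_false, not_forall]
        rcases le_or_gt x r with hxr | hrx
        · exact ⟨0, fun hc => absurd hc.1 (not_lt.2 hxr)⟩
        · obtain ⟨n, hn⟩ := exists_nat_ge (1/(x - r))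
          have hd : (0:ℝ) < x - r := by linarith
          have hlt : 1/((n:ℝ)+1) < x - r := by
            rw [div_lt_iff₀ (by positivity : (0:ℝ) < (n:ℝ)+1)]
            rw [div_le_iff₀ hd] at hn
            nlinarith
          exact ⟨n, fun hc => by linarith [hc.2]⟩
    have := ge_of_tendsto' h2 fun n => h1 n
    linarith
  have hc0 : c < 0 := lt_of_lt_of_le hs₀ (min_le_right _ _)
  have hcH0 : c < H 0 := lt_of_lt_of_le hs₀ (min_le_left _ _)
  have hrpos : 0 < r := by
    rcases hr0.lt_or_eq with h | h
    · exact h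
    · exfalso; rw [← h] at key; linarith
  obtain ⟨θ, hθ0, hθr, hθ⟩ := hstar r hrpos hrL (le_trans key hc0.le)
  have hθB : θ ∈ B := ⟨hθ0, le_trans hθr.le hrL, le_trans hθ.le key⟩
  exact absurd (csInf_le hbdd hθB) (not_le.2 hθr)

lemma prefix_nonneg (μ₁ μ₂ : Measure ℝ) [IsFiniteMeasure μ₁] [IsFiniteMeasure μ₂] (κ L : ℝ)
    (H : ℝ → ℝ) (hH : ∀ s, H s = κ + (μ₁ (Ioc 0 s)).toReal - (μ₂ (Ioc 0 s)).toReal)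
    (hpos : ∀ s, 0 ≤ s → s ≤ L → 0 ≤ H s) {t : ℝ} (ht : 0 < t) (htL : t ≤ L) :
    0 ≤ κ + (μ₁ (Ioo 0 t)).toReal - (μ₂ (Ioo 0 t)).toReal := by
  by_contra hcon
  push_neg at hcon
  obtain ⟨θ, hθ0, hθt, hθ⟩ := leftlim μ₁ μ₂ κ 0 t ht hcon
  have := hpos θ hθ0.le (by linarith)
  rw [hH θ] at this
  linarith

end RealSide

noncomputable def Dc (ρ₁ ρ₂ : Measure Circle') (S : Set Circle') : ℝ :=
  (ρ₁ S).toReal - (ρ₂ S).toReal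

section CircleLemmas

variable (ρ₁ ρ₂ : Measure Circle') [IsFiniteMeasure ρ₁] [IsFiniteMeasure ρ₂]

lemma excess_eq_Dc (u v : Circle') : excess ρ₁ ρ₂ u v = Dc ρ₁ ρ₂ (arcCC u v) := rfl

lemma Dc_union {B C : Set Circle'} (A : Set Circle') (hC : MeasurableSet C)
    (hd : Disjoint B C) (hU : A = B ∪ C) :
    Dc ρ₁ ρ₂ A = Dc ρ₁ ρ₂ B + Dc ρ₁ ρ₂ C := by
  rw [hU]
  unfold Dc
  rw [measure_union hd hC, measure_union hd hC,
    ENNReal.toReal_add (measure_ne_top _ _) (measure_ne_top _ _),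
    ENNReal.toReal_add (measure_ne_top _ _) (measure_ne_top _ _)]
  ring

lemma split1 {u l v : Circle'} (h : theta u l ≤ theta u v) :
    excess ρ₁ ρ₂ u v = excess ρ₁ ρ₂ u l + Dc ρ₁ ρ₂ (arcOC l v) := by
  rw [excess_eq_Dc, excess_eq_Dc]
  refine Dc_union ρ₁ ρ₂ _ (measurableSet_arcOC l v) ?_ ?_
  · rw [arcOC_base h]
    rw [Set.disjoint_left]
    intro w hw hw2
    simp only [arcCC, mem_setOf_eq] at hw
    exact absurd hw (not_le.2 hw2.1)
  · rw [arcOC_base h]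
    ext w
    simp only [arcCC, mem_setOf_eq, mem_union]
    constructor
    · intro h'
      rcases le_or_gt (theta u w) (theta u l) with h1 | h1
      · exact Or.inl h1
      · exact Or.inr ⟨h1, h'⟩
    · rintro (h' | ⟨h1, h2⟩)
      · linarith
      · exact h2

lemma split2 {u l v : Circle'} (h : theta u l ≤ theta u v) :
    excess ρ₁ ρ₂ u v = Dc ρ₁ ρ₂ (arcCO u l) + Dc ρ₁ ρ₂ (arcCC l v) := by
  rw [excess_eq_Dc]
  refine Dc_union ρ₁ ρ₂ _ (measurableSet_arcCC l v) ?_ ?_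
  · rw [arcCC_base h, Set.disjoint_left]
    intro w hw hw2
    simp only [arcCO, mem_setOf_eq] at hw
    exact absurd hw (not_lt.2 hw2.1)
  · rw [arcCC_base h]
    ext w
    simp only [arcCC, arcCO, mem_setOf_eq, mem_union]
    constructor
    · intro h'
      rcases lt_or_ge (theta u w) (theta u l) with h1 | h1
      · exact Or.inl h1
      · exact Or.inr ⟨h1, h'⟩
    · rintro (h' | ⟨h1, h2⟩)
      · linarith
      · exact h2

lemma split3 {l u v : Circle'} (h1 : 0 < theta l u) (h2 : theta l u ≤ theta l v) :
    Dc ρ₁ ρ₂ (arcOC l v) = Dc ρ₁ ρ₂ (arcOO l u) + excess ρ₁ ρ₂ u v := by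
  rw [excess_eq_Dc]
  refine Dc_union ρ₁ ρ₂ _ (measurableSet_arcCC u v) ?_ ?_
  · rw [arcCC_base h2, Set.disjoint_left]
    intro w hw hw2
    simp only [arcOO, mem_setOf_eq] at hw
    exact absurd hw.2 (not_lt.2 hw2.1)
  · rw [arcCC_base h2]
    ext w
    simp only [arcOC, arcOO, mem_setOf_eq, mem_union]
    constructor
    · intro h'
      rcases lt_or_ge (theta l w) (theta l u) with ha | ha
      · exact Or.inl ⟨h'.1, ha⟩
      · exact Or.inr ⟨ha, h'.2⟩
    · rintro (⟨ha, hb⟩ | ⟨ha, hb⟩)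
      · exact ⟨ha, by linarith⟩
      · exact ⟨by linarith, hb⟩

lemma split4 {l u v : Circle'} (h1 : 0 < theta l u) (h2 : theta l u ≤ theta l v) :
    Dc ρ₁ ρ₂ (arcCC l v) = Dc ρ₁ ρ₂ (arcCO l u) + excess ρ₁ ρ₂ u v := by
  rw [excess_eq_Dc]
  refine Dc_union ρ₁ ρ₂ _ (measurableSet_arcCC u v) ?_ ?_
  · rw [arcCC_base h2, Set.disjoint_left]
    intro w hw hw2
    simp only [arcCO, mem_setOf_eq] at hw
    exact absurd hw (not_lt.2 hw2.1)
  · rw [arcCC_base h2]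
    ext w
    simp only [arcCC, arcCO, mem_setOf_eq, mem_union]
    constructor
    · intro h'
      rcases lt_or_ge (theta l w) (theta l u) with ha | ha
      · exact Or.inl ha
      · exact Or.inr ⟨ha, h'⟩
    · rintro (ha | ⟨ha, hb⟩)
      · linarith
      · exact hb

lemma split5 {x w l : Circle'} (h : theta x w < theta x l) :
    Dc ρ₁ ρ₂ (arcCO x l) = excess ρ₁ ρ₂ x w + Dc ρ₁ ρ₂ (arcOO w l) := by
  rw [excess_eq_Dc]
  refine Dc_union ρ₁ ρ₂ _ (measurableSet_arcOO w l) ?_ ?_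
  · rw [arcOO_base h.le, Set.disjoint_left]
    intro z hz hz2
    simp only [arcCC, mem_setOf_eq] at hz
    exact absurd hz (not_le.2 hz2.1)
  · rw [arcOO_base h.le]
    ext z
    simp only [arcCO, arcCC, mem_setOf_eq, mem_union]
    constructor
    · intro h'
      rcases le_or_gt (theta x z) (theta x w) with ha | ha
      · exact Or.inl ha
      · exact Or.inr ⟨ha, h'⟩
    · rintro (ha | ⟨ha, hb⟩)
      · linarith
      · exact hb

lemma theta_inj {x z l : Circle'} (h : theta x z = theta x l) : z = l := by
  have h1 := coe_theta x z
  have h2 := coe_theta x l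
  rw [h] at h1
  have : z - x = l - x := by rw [← h1, ← h2]
  have := sub_left_injective this
  exact this

lemma split6 {x l : Circle'} :
    excess ρ₁ ρ₂ x l = Dc ρ₁ ρ₂ (arcCO x l) + Dc ρ₁ ρ₂ ({l} : Set Circle') := by
  rw [excess_eq_Dc]
  refine Dc_union ρ₁ ρ₂ _ (measurableSet_singleton l) ?_ ?_
  · rw [Set.disjoint_left]
    intro z hz hz2
    simp only [arcCO, mem_setOf_eq] at hz
    rw [mem_singleton_iff] at hz2
    subst hz2
    exact absurd hz (lt_irrefl _)
  · ext z
    simp only [arcCC, arcCO, mem_setOf_eq, mem_union, mem_singleton_iff]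
    constructor
    · intro h'
      rcases lt_or_ge (theta x z) (theta x l) with ha | ha
      · exact Or.inl ha
      · exact Or.inr (theta_inj (le_antisymm h' ha))
    · rintro (ha | rfl)
      · exact ha.le
      · exact le_rfl

end CircleLemmas

section Elemma

variable (ρ₁ ρ₂ : Measure Circle') [IsFiniteMeasure ρ₁] [IsFiniteMeasure ρ₂]

lemma arcCO_self_empty (l : Circle') : arcCO l l = (∅ : Set Circle') := by
  ext w
  simp only [arcCO, mem_setOf_eq, mem_empty_iff_false, iff_false, not_lt, theta_self]
  exact theta_nonneg l w

lemma not_mem_Jset_iff {w : Circle'} : w ∉ Jset ρ₁ ρ₂ ↔ ∀ u, excess ρ₁ ρ₂ u w ≤ 0 := by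
  simp only [Jset, mem_setOf_eq, not_exists, not_lt]

lemma elemma {l : Circle'}
    (hε : ∀ ε : ℝ, 0 < ε → ∃ w ∈ arcCO (l - (ε : Circle')) l, w ∉ Jset ρ₁ ρ₂)
    (x : Circle') :
    Dc ρ₁ ρ₂ (arcCO x l) ≤ 0 := by
  by_cases hx : x = l
  · subst hx
    rw [arcCO_self_empty]
    simp [Dc]
  · set lam := theta x l with hlam
    have hlam0 : 0 < lam := by
      rcases (theta_nonneg x l).lt_or_eq with h | h
      · exact h
      · exact absurd (theta_eq_zero_iff.1 h.symm) (fun he => hx he.symm)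
    have hlam1 : lam < 1 := theta_lt_one x l
    have key : ∀ n : ℕ, Dc ρ₁ ρ₂ (arcCO x l) ≤
        (ρ₁ (theta x ⁻¹' (Ioo (lam - lam/(n+2)) lam))).toReal := by
      intro n
      set δ := lam / ((n:ℝ)+2) with hδ
      have hδ0 : 0 < δ := by positivity
      have hδlam : δ < lam := by
        rw [hδ, div_lt_iff₀ (by positivity : (0:ℝ) < (n:ℝ)+2)]
        nlinarith [Nat.cast_nonneg (α := ℝ) n]
      have hδ1 : δ < 1 := lt_trans hδlam hlam1
      obtain ⟨w, hw, hwJ⟩ := hε δ hδ0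
      have hθl : theta (l - (δ:Circle')) l = δ := by
        have h0 : l - (l - (δ:Circle')) = (δ:Circle') := by abel
        rw [theta, h0, equivIco_coe, Int.fract_eq_self.2 ⟨hδ0.le, hδ1⟩]
      set β := theta (l - (δ:Circle')) w with hβ
      have hβδ : β < δ := by
        have := hw
        simp only [arcCO, mem_setOf_eq] at this
        rwa [hθl] at this
      have hβ0 : 0 ≤ β := theta_nonneg _ _
      -- θ_x w = lam - (δ - β)
      have hxw : theta x w = lam - (δ - β) := by
        have hcoe1 : ((β : ℝ) : Circle') = w - (l - (δ:Circle')) := coe_theta _ w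
        have hcoe2 : ((lam : ℝ) : Circle') = l - x := coe_theta x l
        have h2 : w - x = ((lam - (δ - β) : ℝ) : Circle') := by
          rw [AddCircle.coe_sub, AddCircle.coe_sub, hcoe1, hcoe2]
          abel
        rw [theta, h2, equivIco_coe, Int.fract_eq_self.2 ⟨by linarith, by linarith⟩]
      have hwl : theta x w < theta x l := by rw [hxw, ← hlam]; linarith
      have hsplit := split5 ρ₁ ρ₂ hwl
      have hEw : excess ρ₁ ρ₂ x w ≤ 0 := (not_mem_Jset_iff ρ₁ ρ₂).1 hwJ x
      have hsub : arcOO w l ⊆ theta x ⁻¹' (Ioo (lam - δ) lam) := by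
        rw [arcOO_base hwl.le]
        intro z hz
        simp only [mem_setOf_eq] at hz
        simp only [mem_preimage, mem_Ioo]
        rw [hxw] at hz
        exact ⟨by linarith [hz.1], by rw [hlam]; linarith [hz.2]⟩
      have hDoo : Dc ρ₁ ρ₂ (arcOO w l) ≤ (ρ₁ (theta x ⁻¹' (Ioo (lam - δ) lam))).toReal := by
        unfold Dc
        have h1 : (ρ₁ (arcOO w l)).toReal ≤ (ρ₁ (theta x ⁻¹' (Ioo (lam - δ) lam))).toReal :=
          ENNReal.toReal_mono (measure_ne_top _ _) (measure_mono hsub)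
        have h2 : (0:ℝ) ≤ (ρ₂ (arcOO w l)).toReal := ENNReal.toReal_nonneg
        linarith
      rw [hsplit]
      linarith
    have htend : Tendsto (fun n : ℕ => (ρ₁ (theta x ⁻¹' (Ioo (lam - lam/(n+2)) lam))).toReal)
        atTop (𝓝 0) := by
      refine toReal_tendsto_zero ρ₁ (fun n => measurable_theta x measurableSet_Ioo) ?_ ?_
      · intro m n hmn
        refine preimage_mono (Ioo_subset_Ioo ?_ le_rfl)
        have hm : (0:ℝ) < (m:ℝ)+2 := by positivity
        have hn : (0:ℝ) < (n:ℝ)+2 := by positivity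
        have hc : (m:ℝ) ≤ n := by exact_mod_cast hmn
        have : lam/((n:ℝ)+2) ≤ lam/((m:ℝ)+2) := by
          rw [div_le_div_iff₀ hn hm]; nlinarith
        linarith
      · ext z
        simp only [mem_iInter, mem_preimage, mem_Ioo, mem_empty_iff_false, iff_false, not_forall]
        rcases lt_or_ge (theta x z) lam with hlt | hge
        · obtain ⟨n, hn⟩ := exists_nat_ge (lam / (lam - theta x z))
          have hd : (0:ℝ) < lam - theta x z := by linarith
          have : lam/((n:ℝ)+2) < lam - theta x z := by
            rw [div_lt_iff₀ (by positivity : (0:ℝ) < (n:ℝ)+2)]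
            rw [div_le_iff₀ hd] at hn
            nlinarith
          exact ⟨n, fun hc => by linarith [hc.1]⟩
        · exact ⟨0, fun hc => by linarith [hc.2]⟩
    exact ge_of_tendsto' htend key

end Elemma

section Parts

variable (ρ₁ ρ₂ : Measure Circle') [IsFiniteMeasure ρ₁] [IsFiniteMeasure ρ₂]

lemma arcOC_preim (l t : Circle') : arcOC l t = theta l ⁻¹' (Ioc 0 (theta l t)) := rfl
lemma arcOO_preim (l t : Circle') : arcOO l t = theta l ⁻¹' (Ioo 0 (theta l t)) := rfl

lemma arcCO_preim (l t : Circle') : arcCO l t = theta l ⁻¹' (Ico 0 (theta l t)) := by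
  ext w
  simp only [arcCO, mem_setOf_eq, mem_preimage, mem_Ico]
  exact ⟨fun h => ⟨theta_nonneg l w, h⟩, fun h => h.2⟩

lemma arcCC_preim (l t : Circle') : arcCC l t = theta l ⁻¹' (Icc 0 (theta l t)) := by
  ext w
  simp only [arcCC, mem_setOf_eq, mem_preimage, mem_Icc]
  exact ⟨fun h => ⟨theta_nonneg l w, h⟩, fun h => h.2⟩

lemma singleton_preim (l : Circle') : ({l} : Set Circle') = theta l ⁻¹' ({0} : Set ℝ) := by
  ext w
  simp only [mem_singleton_iff, mem_preimage]
  constructor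
  · rintro rfl; exact theta_self _
  · intro h; exact theta_eq_zero_iff.1 h

lemma partb (v : Circle') (l : Circle') (hl : l ∉ Jset ρ₁ ρ₂)
    (hvl : v ≠ l) (hsub : arcOC l v ⊆ Jset ρ₁ ρ₂) :
    flux ρ₁ ρ₂ v = (ρ₁ (arcOC l v)).toReal - (ρ₂ (arcOC l v)).toReal := by
  set μ₁ := ρ₁.map (theta l) with hμ₁
  set μ₂ := ρ₂.map (theta l) with hμ₂
  haveI : IsFiniteMeasure μ₁ := ρ₁.isFiniteMeasure_map (theta l)
  haveI : IsFiniteMeasure μ₂ := ρ₂.isFiniteMeasure_map (theta l)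
  set L := theta l v with hLdef
  have hL1 : L < 1 := theta_lt_one l v
  have hL0 : 0 < L := by
    rcases (theta_nonneg l v).lt_or_eq with h | h
    · exact h
    · exact absurd (theta_eq_zero_iff.1 h.symm) hvl
  set H : ℝ → ℝ := fun s => 0 + (μ₁ (Ioc 0 s)).toReal - (μ₂ (Ioc 0 s)).toReal with hHdef
  have hH : ∀ s, H s = 0 + (μ₁ (Ioc 0 s)).toReal - (μ₂ (Ioc 0 s)).toReal := fun s => rfl
  have hOC : ∀ t : Circle', Dc ρ₁ ρ₂ (arcOC l t) = H (theta l t) := by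
    intro t
    rw [hH, hμ₁, hμ₂, Measure.map_apply (measurable_theta l) measurableSet_Ioc,
      Measure.map_apply (measurable_theta l) measurableSet_Ioc, ← arcOC_preim]
    unfold Dc; ring
  have hOO : ∀ t : Circle', Dc ρ₁ ρ₂ (arcOO l t) =
      0 + (μ₁ (Ioo 0 (theta l t))).toReal - (μ₂ (Ioo 0 (theta l t))).toReal := by
    intro t
    rw [hμ₁, hμ₂, Measure.map_apply (measurable_theta l) measurableSet_Ioo,
      Measure.map_apply (measurable_theta l) measurableSet_Ioo, ← arcOO_preim]
    unfold Dc; ring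
  have hEul : ∀ u, excess ρ₁ ρ₂ u l ≤ 0 := (not_mem_Jset_iff ρ₁ ρ₂).1 hl
  have hstar : ∀ s, 0 < s → s ≤ L → H s ≤ 0 → ∃ θ, 0 ≤ θ ∧ θ < s ∧ H θ < H s := by
    intro s hs0 hsL hHs
    set t : Circle' := l + ((s:ℝ) : Circle') with htdef
    have hts : theta l t = s := by
      rw [htdef, theta_add_coe, Int.fract_eq_self.2 ⟨hs0.le, lt_of_le_of_lt hsL hL1⟩]
    have htJ : t ∈ Jset ρ₁ ρ₂ := hsub (by
      simp only [arcOC, mem_setOf_eq, hts]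
      exact ⟨hs0, hsL⟩)
    obtain ⟨x, hx⟩ := htJ
    have hHt : Dc ρ₁ ρ₂ (arcOC l t) = H s := by rw [hOC t, hts]
    rcases theta_trichotomy l x t (theta_nonneg l t) with hcase | hcase
    · exfalso
      have hsp := split1 ρ₁ ρ₂ hcase
      rw [hHt] at hsp
      linarith [hEul x, hx]
    · have hxt := hcase.2
      have h3 := split3 ρ₁ ρ₂ hcase.1 hxt
      rw [hHt] at h3
      have hDoo : 0 + (μ₁ (Ioo 0 (theta l x))).toReal - (μ₂ (Ioo 0 (theta l x))).toReal < H s := by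
        rw [← hOO x]
        linarith [hx]
      obtain ⟨θ, hθ0, hθa, hθ⟩ := leftlim μ₁ μ₂ 0 (H s) (theta l x) hcase.1 hDoo
      have hxs : theta l x ≤ s := by rw [← hts]; exact hcase.2
      exact ⟨θ, hθ0.le, lt_of_lt_of_le hθa hxs, by rw [hH]; exact hθ⟩
  have hH0 : H 0 = 0 := by rw [hH]; simp
  have hpos : ∀ s, 0 ≤ s → s ≤ L → 0 ≤ H s := by
    intro s h1 h2
    have := core μ₁ μ₂ 0 L H hH hstar s h1 h2
    rw [hH0] at this
    simpa using this
  have hTub : ∀ u, excess ρ₁ ρ₂ u v ≤ H L := by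
    intro u
    rcases theta_trichotomy l u v (theta_nonneg l v) with hcase | hcase
    · have hsp := split1 ρ₁ ρ₂ hcase
      rw [hOC v] at hsp
      linarith [hEul u]
    · have h3 := split3 ρ₁ ρ₂ hcase.1 hcase.2
      rw [hOC v] at h3
      have hpre := prefix_nonneg μ₁ μ₂ 0 L H hH hpos hcase.1 hcase.2
      rw [← hOO u] at hpre
      linarith
  have hHL0 : 0 ≤ H L := hpos L hL0.le le_rfl
  have hbdd : BddAbove (range fun u => max (excess ρ₁ ρ₂ u v) 0) := by
    refine ⟨H L, ?_⟩
    rintro y ⟨u, rfl⟩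
    exact max_le (hTub u) hHL0
  have hub : flux ρ₁ ρ₂ v ≤ H L := ciSup_le fun u => max_le (hTub u) hHL0
  have hlow : ∀ n : ℕ, H L - (μ₁ (Ioo 0 (L/((n:ℝ)+1)))).toReal ≤ flux ρ₁ ρ₂ v := by
    intro n
    set e := L / ((n:ℝ)+1) with hedef
    have he0 : 0 < e := by positivity
    have heL : e ≤ L := by
      rw [hedef, div_le_iff₀ (by positivity : (0:ℝ) < (n:ℝ)+1)]
      nlinarith [Nat.cast_nonneg (α := ℝ) n, hL0]
    set u : Circle' := l + ((e:ℝ) : Circle') with hudef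
    have hue : theta l u = e := by
      rw [hudef, theta_add_coe, Int.fract_eq_self.2 ⟨he0.le, lt_of_le_of_lt heL hL1⟩]
    have hu0 : 0 < theta l u := by rw [hue]; exact he0
    have huL : theta l u ≤ theta l v := by rw [hue]; exact heL
    have h3 := split3 ρ₁ ρ₂ hu0 huL
    rw [hOC v] at h3
    have hDooLe : Dc ρ₁ ρ₂ (arcOO l u) ≤ (μ₁ (Ioo 0 e)).toReal := by
      rw [hOO u, hue]
      have : (0:ℝ) ≤ (μ₂ (Ioo 0 e)).toReal := ENNReal.toReal_nonneg
      linarith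
    have hEuv : H L - (μ₁ (Ioo 0 e)).toReal ≤ excess ρ₁ ρ₂ u v := by linarith
    have hle : excess ρ₁ ρ₂ u v ≤ flux ρ₁ ρ₂ v :=
      le_trans (le_max_left _ _) (le_ciSup hbdd u)
    linarith
  have htend : Tendsto (fun n : ℕ => H L - (μ₁ (Ioo 0 (L/((n:ℝ)+1)))).toReal) atTop
      (𝓝 (H L - 0)) := by
    refine tendsto_const_nhds.sub (toReal_tendsto_zero μ₁ (fun n => measurableSet_Ioo) ?_ ?_)
    · intro m n hmn
      refine Ioo_subset_Ioo le_rfl ?_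
      have hm : (0:ℝ) < (m:ℝ)+1 := by positivity
      have hn : (0:ℝ) < (n:ℝ)+1 := by positivity
      have hc : (m:ℝ) ≤ n := by exact_mod_cast hmn
      rw [div_le_div_iff₀ hn hm]
      nlinarith
    · ext x
      simp only [mem_iInter, mem_Ioo, mem_empty_iff_false, iff_false, not_forall]
      rcases le_or_gt x 0 with hx0 | hx0
      · exact ⟨0, fun hc => absurd hc.1 (not_lt.2 hx0)⟩
      · obtain ⟨n, hn⟩ := exists_nat_ge (L / x)
        have : L/((n:ℝ)+1) < x := by
          rw [div_lt_iff₀ (by positivity : (0:ℝ) < (n:ℝ)+1)]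
          rw [div_le_iff₀ hx0] at hn
          nlinarith
        exact ⟨n, fun hc => by linarith [hc.2]⟩
  have hlower : H L - 0 ≤ flux ρ₁ ρ₂ v := le_of_tendsto' htend hlow
  have hflux : flux ρ₁ ρ₂ v = H L := le_antisymm hub (by linarith)
  have hfin : H L = (ρ₁ (arcOC l v)).toReal - (ρ₂ (arcOC l v)).toReal := by
    have := hOC v
    rw [← hLdef] at this
    rw [← this]
    rfl
  rw [hflux, hfin]

end Parts

section PartA

variable (ρ₁ ρ₂ : Measure Circle') [IsFiniteMeasure ρ₁] [IsFiniteMeasure ρ₂]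

lemma parta (v : Circle') (l : Circle') (hlJ : l ∈ Jset ρ₁ ρ₂)
    (hsub : arcCC l v ⊆ Jset ρ₁ ρ₂)
    (hε : ∀ ε : ℝ, 0 < ε → ∃ w ∈ arcCO (l - (ε : Circle')) l, w ∉ Jset ρ₁ ρ₂) :
    flux ρ₁ ρ₂ v = excess ρ₁ ρ₂ l v := by
  set μ₁ := ρ₁.map (theta l) with hμ₁
  set μ₂ := ρ₂.map (theta l) with hμ₂
  haveI : IsFiniteMeasure μ₁ := ρ₁.isFiniteMeasure_map (theta l)
  haveI : IsFiniteMeasure μ₂ := ρ₂.isFiniteMeasure_map (theta l)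
  set L := theta l v with hLdef
  have hL1 : L < 1 := theta_lt_one l v
  have hL0 : 0 ≤ L := theta_nonneg l v
  set κ := Dc ρ₁ ρ₂ ({l} : Set Circle') with hκdef
  have hκμ : ∀ ρ : Measure Circle', (ρ.map (theta l)) ({0} : Set ℝ) = ρ ({l} : Set Circle') := by
    intro ρ
    rw [Measure.map_apply (measurable_theta l) (measurableSet_singleton 0), ← singleton_preim]
  set H : ℝ → ℝ := fun s => κ + (μ₁ (Ioc 0 s)).toReal - (μ₂ (Ioc 0 s)).toReal with hHdef
  have hH : ∀ s, H s = κ + (μ₁ (Ioc 0 s)).toReal - (μ₂ (Ioc 0 s)).toReal := fun s => rfl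
  have hIcc : ∀ ρ : Measure Circle', IsFiniteMeasure ρ → ∀ s : ℝ, 0 ≤ s →
      ((ρ.map (theta l)) (Icc 0 s)).toReal
        = ((ρ.map (theta l)) ({0}:Set ℝ)).toReal + ((ρ.map (theta l)) (Ioc 0 s)).toReal := by
    intro ρ hfin s hs
    haveI := hfin
    haveI : IsFiniteMeasure (ρ.map (theta l)) := ρ.isFiniteMeasure_map (theta l)
    have hun : Icc (0:ℝ) s = {0} ∪ Ioc 0 s := by
      ext z
      simp only [mem_Icc, mem_union, mem_singleton_iff, mem_Ioc]
      constructor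
      · rintro ⟨h1, h2⟩
        rcases h1.lt_or_eq with h | h
        · exact Or.inr ⟨h, h2⟩
        · exact Or.inl h.symm
      · rintro (rfl | ⟨h1, h2⟩)
        · exact ⟨le_rfl, hs⟩
        · exact ⟨h1.le, h2⟩
    have hdisj : Disjoint ({(0:ℝ)} : Set ℝ) (Ioc 0 s) := by
      rw [Set.disjoint_left]
      rintro z rfl hz2
      · exact absurd hz2.1 (lt_irrefl _)
    rw [hun, measure_union hdisj measurableSet_Ioc,
      ENNReal.toReal_add (measure_ne_top _ _) (measure_ne_top _ _)]
  have hCC : ∀ t : Circle', Dc ρ₁ ρ₂ (arcCC l t) = H (theta l t) := by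
    intro t
    rw [hH]
    unfold Dc
    rw [arcCC_preim]
    rw [← Measure.map_apply (measurable_theta l) measurableSet_Icc,
      ← Measure.map_apply (measurable_theta l) measurableSet_Icc]
    rw [← hμ₁, ← hμ₂] at *
    rw [hIcc ρ₁ inferInstance _ (theta_nonneg l t), hIcc ρ₂ inferInstance _ (theta_nonneg l t)]
    rw [hκdef]
    unfold Dc
    rw [← hκμ ρ₁, ← hκμ ρ₂]
    rw [← hμ₁, ← hμ₂]
    ring
  have hCO : ∀ t : Circle', 0 < theta l t → Dc ρ₁ ρ₂ (arcCO l t) =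
      κ + (μ₁ (Ioo 0 (theta l t))).toReal - (μ₂ (Ioo 0 (theta l t))).toReal := by
    intro t ht
    unfold Dc
    rw [arcCO_preim]
    rw [← Measure.map_apply (measurable_theta l) measurableSet_Ico,
      ← Measure.map_apply (measurable_theta l) measurableSet_Ico]
    have hun : Ico (0:ℝ) (theta l t) = {0} ∪ Ioo 0 (theta l t) := by
      ext z
      simp only [mem_Ico, mem_union, mem_singleton_iff, mem_Ioo]
      constructor
      · rintro ⟨h1, h2⟩
        rcases h1.lt_or_eq with h | h
        · exact Or.inr ⟨h, h2⟩
        · exact Or.inl h.symm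
      · rintro (rfl | ⟨h1, h2⟩)
        · exact ⟨le_rfl, ht⟩
        · exact ⟨h1.le, h2⟩
    have hdisj : Disjoint ({(0:ℝ)} : Set ℝ) (Ioo 0 (theta l t)) := by
      rw [Set.disjoint_left]
      rintro z rfl hz2
      · exact absurd hz2.1 (lt_irrefl _)
    rw [hun, measure_union hdisj measurableSet_Ioo, measure_union hdisj measurableSet_Ioo,
      ENNReal.toReal_add (measure_ne_top _ _) (measure_ne_top _ _),
      ENNReal.toReal_add (measure_ne_top _ _) (measure_ne_top _ _)]
    rw [hκdef]
    unfold Dc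
    rw [← hκμ ρ₁, ← hκμ ρ₂, ← hμ₁, ← hμ₂]
    ring
  have hEl : ∀ x : Circle', Dc ρ₁ ρ₂ (arcCO x l) ≤ 0 := elemma ρ₁ ρ₂ hε
  have hκpos : 0 < κ := by
    obtain ⟨x, hx⟩ := hlJ
    have h6 := split6 ρ₁ ρ₂ (x := x) (l := l)
    have := hEl x
    rw [← hκdef] at h6
    linarith
  have hH0 : H 0 = κ := by rw [hH]; simp
  have hstar : ∀ s, 0 < s → s ≤ L → H s ≤ 0 → ∃ θ, 0 ≤ θ ∧ θ < s ∧ H θ < H s := by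
    intro s hs0 hsL hHs
    set t : Circle' := l + ((s:ℝ) : Circle') with htdef
    have hts : theta l t = s := by
      rw [htdef, theta_add_coe, Int.fract_eq_self.2 ⟨hs0.le, lt_of_le_of_lt hsL hL1⟩]
    have htJ : t ∈ Jset ρ₁ ρ₂ := hsub (by
      simp only [arcCC, mem_setOf_eq, hts]
      exact hsL)
    obtain ⟨x, hx⟩ := htJ
    have hHt : Dc ρ₁ ρ₂ (arcCC l t) = H s := by rw [hCC t, hts]
    rcases theta_trichotomy l x t (theta_nonneg l t) with hcase | hcase
    · exfalso
      have hsp := split2 ρ₁ ρ₂ hcase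
      rw [hHt] at hsp
      linarith [hEl x]
    · have h4 := split4 ρ₁ ρ₂ hcase.1 hcase.2
      rw [hHt] at h4
      have hDco : κ + (μ₁ (Ioo 0 (theta l x))).toReal - (μ₂ (Ioo 0 (theta l x))).toReal < H s := by
        rw [← hCO x hcase.1]
        linarith
      obtain ⟨θ, hθ0, hθa, hθ⟩ := leftlim μ₁ μ₂ κ (H s) (theta l x) hcase.1 hDco
      have hxs : theta l x ≤ s := by rw [← hts]; exact hcase.2
      exact ⟨θ, hθ0.le, lt_of_lt_of_le hθa hxs, by rw [hH]; exact hθ⟩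
  have hpos : ∀ s, 0 ≤ s → s ≤ L → 0 ≤ H s := by
    intro s h1 h2
    have := core μ₁ μ₂ κ L H hH hstar s h1 h2
    rw [hH0] at this
    have hmin : min κ 0 = 0 := min_eq_right hκpos.le
    rw [hmin] at this
    exact this
  have hTub : ∀ u, excess ρ₁ ρ₂ u v ≤ H L := by
    intro u
    rcases theta_trichotomy l u v (theta_nonneg l v) with hcase | hcase
    · have hsp := split2 ρ₁ ρ₂ hcase
      rw [hCC v] at hsp
      linarith [hEl u]
    · have h4 := split4 ρ₁ ρ₂ hcase.1 hcase.2
      rw [hCC v] at h4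
      have hpre := prefix_nonneg μ₁ μ₂ κ L H hH hpos hcase.1 hcase.2
      rw [← hCO u hcase.1] at hpre
      linarith
  have hHL0 : 0 ≤ H L := hpos L hL0 le_rfl
  have hbdd : BddAbove (range fun u => max (excess ρ₁ ρ₂ u v) 0) := by
    refine ⟨H L, ?_⟩
    rintro y ⟨u, rfl⟩
    exact max_le (hTub u) hHL0
  have hub : flux ρ₁ ρ₂ v ≤ H L := ciSup_le fun u => max_le (hTub u) hHL0
  have hElv : excess ρ₁ ρ₂ l v = H L := by
    rw [excess_eq_Dc, hCC v]
  have hlow : H L ≤ flux ρ₁ ρ₂ v := by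
    have hle : excess ρ₁ ρ₂ l v ≤ flux ρ₁ ρ₂ v :=
      le_trans (le_max_left _ _) (le_ciSup hbdd l)
    linarith
  rw [le_antisymm hub hlow, hElv]

end PartA

/-- value of the flux at a point `v ∈ 𝒥` in terms of the left endpoint of
the connected component of `𝒥` containing `v`.
(a) If `l ∈ 𝒥`, the closed arc `[l,v]` is contained in `𝒥` and every arc `[l-ε, l)`
contains a point outside `𝒥`, then `J(v) = E(l,v)`.
(b) If `l ∉ 𝒥` and the half-open arc `(l,v]` is contained in `𝒥`, then
`J(v) = ρ₁((l,v]) - ρ₂((l,v])`. -/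
theorem stmt2 (ρ₁ ρ₂ : Measure Circle') [IsFiniteMeasure ρ₁] [IsFiniteMeasure ρ₂]
    (hmass : ρ₁ Set.univ ≤ ρ₂ Set.univ) (v : Circle') (hv : v ∈ Jset ρ₁ ρ₂) :
    (∀ l : Circle', l ∈ Jset ρ₁ ρ₂ → arcCC l v ⊆ Jset ρ₁ ρ₂ →
      (∀ ε : ℝ, 0 < ε → ∃ w ∈ arcCO (l - (ε : Circle')) l, w ∉ Jset ρ₁ ρ₂) →
      flux ρ₁ ρ₂ v = excess ρ₁ ρ₂ l v) ∧
    (∀ l : Circle', l ∉ Jset ρ₁ ρ₂ → arcOC l v ⊆ Jset ρ₁ ρ₂ →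
      flux ρ₁ ρ₂ v = (ρ₁ (arcOC l v)).toReal - (ρ₂ (arcOC l v)).toReal) := by
  constructor
  · intro l hlJ hsub hε
    exact parta ρ₁ ρ₂ v l hlJ hsub hε
  · intro l hl hsub
    have hvl : v ≠ l := fun h => hl (h ▸ hv)
    exact partb ρ₁ ρ₂ v l hl hvl hsub

end
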